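/- Let P and P̂ be n×r real basis matrices and set ζ* := ‖(I − P̂ P̂ᵀ) P‖₂. Then for every s, κ_s(P̂)² ≤ κ_s(P)² + 2 ζ*. -/

import Mathlib

open Matrix

/-- Spectral norm (largest singular value) of a real matrix. -/
noncomputable def specNorm {m n : Type*} [Fintype m] [Fintype n] [DecidableEq n]
    (A : Matrix m n ℝ) : ℝ :=
  ‖LinearMap.toContinuousLinearMap (Matrix.toEuclideanLin A)‖

/-- Denseness coefficient `κ_s(P) = max_{|T| ≤ s} ‖I_Tᵀ P‖₂`. -/
noncomputable def kappa {n : ℕ} {r : Type*} [Fintype r] [DecidableEq r]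
    (s : ℕ) (P : Matrix (Fin n) r ℝ) : ℝ :=
  ⨆ T : {T : Finset (Fin n) // T.card ≤ s},
    specNorm (P.submatrix (fun i : {i // i ∈ T.1} => i.1) id)

namespace Stmt7Aux

open ContinuousLinearMap
open scoped RealInnerProductSpace


variable {E F G : Type*}
  [NormedAddCommGroup E] [InnerProductSpace ℝ E] [CompleteSpace E]
  [NormedAddCommGroup F] [InnerProductSpace ℝ F] [CompleteSpace F]
  [NormedAddCommGroup G] [InnerProductSpace ℝ G] [CompleteSpace G]

lemma isom_norm (p : F →L[ℝ] E) (hp : adjoint p ∘L p = 1) (x : F) : ‖p x‖ = ‖x‖ := by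
  rw [p.apply_norm_eq_sqrt_inner_adjoint_left x, hp]
  simp [real_inner_self_eq_norm_mul_norm, Real.sqrt_mul_self (norm_nonneg x)]

lemma isom_opnorm (p : F →L[ℝ] E) (hp : adjoint p ∘L p = 1) : ‖p‖ ≤ 1 := by
  refine opNorm_le_bound _ zero_le_one fun x => ?_
  rw [isom_norm p hp x, one_mul]

lemma pyth (p : F →L[ℝ] E) (hp : adjoint p ∘L p = 1) (y : E) :
    ‖y - p (adjoint p y)‖ ^ 2 = ‖y‖ ^ 2 - ‖adjoint p y‖ ^ 2 := by
  have hz : ‖p (adjoint p y)‖ = ‖adjoint p y‖ := isom_norm p hp _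
  have hin : (inner ℝ y (p (adjoint p y)) : ℝ) = ‖adjoint p y‖ ^ 2 := by
    rw [← ContinuousLinearMap.adjoint_inner_left, real_inner_self_eq_norm_sq]
  rw [norm_sub_sq_real, hz, hin]; ring

lemma sublemma [FiniteDimensional ℝ F] (b : F →L[ℝ] F) (K : ℝ) (hK : 0 < K)
    (h : ∀ y, K * ‖y‖ ^ 2 ≤ ‖adjoint b y‖ ^ 2) (x : F) : K * ‖x‖ ^ 2 ≤ ‖b x‖ ^ 2 := by
  have hinj : Function.Injective (adjoint b : F →ₗ[ℝ] F) := by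
    intro y z hyz
    have h0 : adjoint b (y - z) = 0 := by
      simp only [map_sub]
      simpa [sub_eq_zero] using hyz
    have h2 := h (y - z)
    rw [h0, norm_zero] at h2
    have : ‖y - z‖ = 0 := by
      by_contra hne
      have hpos : 0 < ‖y - z‖ := lt_of_le_of_ne (norm_nonneg _) (Ne.symm hne)
      nlinarith [mul_pos hK (mul_pos hpos hpos)]
    rwa [norm_eq_zero, sub_eq_zero] at this
  have hsurj : Function.Surjective (adjoint b : F →ₗ[ℝ] F) :=
    (LinearMap.injective_iff_surjective).mp hinj
  rcases eq_or_ne x 0 with rfl | hx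
  · simp
  have hxpos : (0 : ℝ) < ‖x‖ := norm_pos_iff.mpr hx
  obtain ⟨y, hy⟩ := hsurj x
  have hy' : adjoint b y = x := hy
  have h1 : ‖x‖ ^ 2 = (inner ℝ y (b x) : ℝ) := by
    rw [← ContinuousLinearMap.adjoint_inner_left, hy', real_inner_self_eq_norm_sq]
  have h2 : (inner ℝ y (b x) : ℝ) ≤ ‖y‖ * ‖b x‖ := real_inner_le_norm _ _
  have h3 : K * ‖y‖ ^ 2 ≤ ‖x‖ ^ 2 := by rw [← hy']; exact h y
  have h4 : ‖x‖ ^ 2 * ‖x‖ ^ 2 ≤ (‖y‖ * ‖b x‖) * (‖y‖ * ‖b x‖) := by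
    have := mul_self_le_mul_self (by positivity : (0:ℝ) ≤ ‖x‖ ^ 2) (h1 ▸ h2)
    linarith
  have h5 : K * (‖y‖ ^ 2) * ‖b x‖ ^ 2 ≤ ‖x‖ ^ 2 * ‖b x‖ ^ 2 :=
    mul_le_mul_of_nonneg_right h3 (sq_nonneg _)
  have h6 : K * (‖x‖ ^ 2 * ‖x‖ ^ 2) ≤ K * ((‖y‖ * ‖b x‖) * (‖y‖ * ‖b x‖)) :=
    mul_le_mul_of_nonneg_left h4 hK.le
  have h7 : 0 < ‖x‖ ^ 2 := by positivity
  nlinarith [h5, h6, h7]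

lemma key3 [FiniteDimensional ℝ F] (p q : F →L[ℝ] E)
    (hp : adjoint p ∘L p = 1) (hq : adjoint q ∘L q = 1) :
    ‖(1 - p ∘L adjoint p) ∘L q‖ ≤ ‖(1 - q ∘L adjoint q) ∘L p‖ := by
  set ζ : ℝ := ‖(1 - q ∘L adjoint q) ∘L p‖ with hzd
  have hζ0 : 0 ≤ ζ := norm_nonneg _
  set b : F →L[ℝ] F := adjoint p ∘L q with hb
  have hbadj : adjoint b = adjoint q ∘L p := by
    rw [hb, adjoint_comp, adjoint_adjoint]
  -- key quadratic identities
  have happlyL : ∀ x : F, ‖((1 - p ∘L adjoint p) ∘L q) x‖ ^ 2 = ‖x‖ ^ 2 - ‖b x‖ ^ 2 := by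
    intro x
    have h1 : ((1 - p ∘L adjoint p) ∘L q) x = q x - p (adjoint p (q x)) := by
      simp [ContinuousLinearMap.comp_apply, ContinuousLinearMap.sub_apply]
    rw [h1, pyth p hp (q x), isom_norm q hq x]
    rfl
  have happlyR : ∀ y : F, ‖y‖ ^ 2 - ‖adjoint b y‖ ^ 2 ≤ ζ ^ 2 * ‖y‖ ^ 2 := by
    intro y
    have h1 : ((1 - q ∘L adjoint q) ∘L p) y = p y - q (adjoint q (p y)) := by
      simp [ContinuousLinearMap.comp_apply, ContinuousLinearMap.sub_apply]
    have h2 : ‖((1 - q ∘L adjoint q) ∘L p) y‖ ≤ ζ * ‖y‖ :=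
      ((1 - q ∘L adjoint q) ∘L p).le_opNorm y
    have h3 : ‖p y - q (adjoint q (p y))‖ ^ 2 = ‖p y‖ ^ 2 - ‖adjoint q (p y)‖ ^ 2 :=
      pyth q hq (p y)
    have h4 : ‖p y‖ = ‖y‖ := isom_norm p hp y
    have h5 : adjoint b y = adjoint q (p y) := by rw [hbadj]; rfl
    rw [h1] at h2
    have h6 : ‖p y - q (adjoint q (p y))‖ ^ 2 ≤ (ζ * ‖y‖) ^ 2 := by
      have := norm_nonneg (p y - q (adjoint q (p y)))
      nlinarith
    rw [h3, h4, h5] at *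
    nlinarith [h6]
  -- pointwise bound
  refine opNorm_le_bound _ hζ0 fun x => ?_
  have hsq : ‖((1 - p ∘L adjoint p) ∘L q) x‖ ^ 2 ≤ (ζ * ‖x‖) ^ 2 := by
    rw [happlyL x]
    by_cases h1 : 1 ≤ ζ
    · have h2 : (1:ℝ) * ‖x‖ ^ 2 ≤ ζ ^ 2 * ‖x‖ ^ 2 :=
        mul_le_mul_of_nonneg_right (by nlinarith) (sq_nonneg _)
      nlinarith [sq_nonneg ‖b x‖]
    · have hK : 0 < 1 - ζ ^ 2 := by push_neg at h1; nlinarith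
      have h2 : ∀ y : F, (1 - ζ ^ 2) * ‖y‖ ^ 2 ≤ ‖adjoint b y‖ ^ 2 := by
        intro y; have := happlyR y; nlinarith
      have h3 := sublemma b (1 - ζ ^ 2) hK h2 x
      nlinarith
  have h4 := Real.sqrt_le_sqrt hsq
  rwa [Real.sqrt_sq (norm_nonneg _), Real.sqrt_sq (mul_nonneg hζ0 (norm_nonneg _))] at h4

lemma norm_adjoint' (T : E →L[ℝ] G) : ‖adjoint T‖ = ‖T‖ :=
  LinearIsometryEquiv.norm_map adjoint T

lemma normsq (T : E →L[ℝ] G) : ‖T‖ ^ 2 = ‖T ∘L adjoint T‖ := by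
  have h := norm_adjoint_comp_self (adjoint T)
  rw [adjoint_adjoint, norm_adjoint'] at h
  rw [h]; ring

lemma adjoint_one' : adjoint (1 : E →L[ℝ] E) = 1 := by
  rw [ContinuousLinearMap.one_def, adjoint_id]

set_option maxHeartbeats 2000000 in
lemma main [FiniteDimensional ℝ F] (p q : F →L[ℝ] E) (a : E →L[ℝ] G)
    (hp : adjoint p ∘L p = 1) (hq : adjoint q ∘L q = 1) (ha : a ∘L adjoint a = 1) :
    ‖a ∘L q‖ ^ 2 ≤ ‖a ∘L p‖ ^ 2 + 2 * ‖(1 - q ∘L adjoint q) ∘L p‖ := by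
  set ζ : ℝ := ‖(1 - q ∘L adjoint q) ∘L p‖ with hzd
  have hζ0 : 0 ≤ ζ := norm_nonneg _
  -- norms of a
  have hna' : ‖adjoint a‖ ≤ 1 := by
    have h := norm_adjoint_comp_self (adjoint a)
    rw [adjoint_adjoint, ha] at h
    have h1 : ‖(1 : G →L[ℝ] G)‖ ≤ 1 := by
      rw [ContinuousLinearMap.one_def]; exact norm_id_le
    nlinarith [norm_nonneg (adjoint a)]
  have hna : ‖a‖ ≤ 1 := by rw [← norm_adjoint']; exact hna'
  have hnp' : ‖adjoint p‖ ≤ 1 := by rw [norm_adjoint']; exact isom_opnorm p hp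
  have hnq' : ‖adjoint q‖ ≤ 1 := by rw [norm_adjoint']; exact isom_opnorm q hq
  set u : E →L[ℝ] E := q ∘L adjoint q with hu
  set v : E →L[ℝ] E := p ∘L adjoint p with hv
  have huadj : adjoint u = u := by rw [hu, adjoint_comp, adjoint_adjoint]
  -- bound on ‖u - v‖
  have hkey : ‖(1 - v) ∘L q‖ ≤ ζ := key3 p q hp hq
  have hterm2 : ‖(1 - u) ∘L v‖ ≤ ζ := by
    have he : (1 - u) ∘L v = ((1 - u) ∘L p) ∘L adjoint p := by
      rw [hv, ← ContinuousLinearMap.comp_assoc]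
    rw [he]
    calc ‖((1 - u) ∘L p) ∘L adjoint p‖ ≤ ‖(1 - u) ∘L p‖ * ‖adjoint p‖ := opNorm_comp_le _ _
    _ ≤ ζ * 1 := by
        apply mul_le_mul (le_of_eq rfl) hnp' (norm_nonneg _) hζ0
    _ = ζ := mul_one ζ
  have hterm1 : ‖u ∘L (1 - v)‖ ≤ ζ := by
    have he : adjoint ((1 - v) ∘L u) = u ∘L (1 - v) := by
      rw [adjoint_comp, huadj, map_sub, adjoint_one', hv, adjoint_comp, adjoint_adjoint]
    have he2 : (1 - v) ∘L u = ((1 - v) ∘L q) ∘L adjoint q := by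
      rw [hu, ← ContinuousLinearMap.comp_assoc]
    rw [← he, norm_adjoint', he2]
    calc ‖((1 - v) ∘L q) ∘L adjoint q‖ ≤ ‖(1 - v) ∘L q‖ * ‖adjoint q‖ := opNorm_comp_le _ _
    _ ≤ ζ * 1 := mul_le_mul hkey hnq' (norm_nonneg _) hζ0
    _ = ζ := mul_one ζ
  have hid2 : u - v = (u ∘L (1 - v)) - ((1 - u) ∘L v) := by
    ext x
    simp [ContinuousLinearMap.comp_apply, ContinuousLinearMap.sub_apply,
      ContinuousLinearMap.one_apply, map_sub]
  have huv : ‖u - v‖ ≤ 2 * ζ := by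
    rw [hid2]
    calc ‖(u ∘L (1 - v)) - ((1 - u) ∘L v)‖ ≤ ‖u ∘L (1 - v)‖ + ‖(1 - u) ∘L v‖ :=
      norm_sub_le _ _
    _ ≤ ζ + ζ := add_le_add hterm1 hterm2
    _ = 2 * ζ := by ring
  -- main computation
  have hid1 : (a ∘L q) ∘L adjoint (a ∘L q)
      = (a ∘L ((u - v) ∘L adjoint a)) + ((a ∘L p) ∘L adjoint (a ∘L p)) := by
    ext x
    simp [hu, hv, adjoint_comp, ContinuousLinearMap.comp_apply,
      ContinuousLinearMap.sub_apply, ContinuousLinearMap.add_apply, map_sub]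
  have hb1 : ‖a ∘L ((u - v) ∘L adjoint a)‖ ≤ 2 * ζ := by
    calc ‖a ∘L ((u - v) ∘L adjoint a)‖ ≤ ‖a‖ * ‖(u - v) ∘L adjoint a‖ := opNorm_comp_le _ _
    _ ≤ 1 * ‖(u - v) ∘L adjoint a‖ :=
      mul_le_mul_of_nonneg_right hna (norm_nonneg _)
    _ = ‖(u - v) ∘L adjoint a‖ := one_mul _
    _ ≤ ‖u - v‖ * ‖adjoint a‖ := opNorm_comp_le _ _
    _ ≤ (2 * ζ) * 1 := mul_le_mul huv hna' (norm_nonneg _) (by linarith)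
    _ = 2 * ζ := mul_one _
  calc ‖a ∘L q‖ ^ 2 = ‖(a ∘L q) ∘L adjoint (a ∘L q)‖ := normsq _
  _ = ‖(a ∘L ((u - v) ∘L adjoint a)) + ((a ∘L p) ∘L adjoint (a ∘L p))‖ := by rw [hid1]
  _ ≤ ‖a ∘L ((u - v) ∘L adjoint a)‖ + ‖(a ∘L p) ∘L adjoint (a ∘L p)‖ := norm_add_le _ _
  _ ≤ 2 * ζ + ‖a ∘L p‖ ^ 2 := add_le_add hb1 (le_of_eq (normsq _).symm)
  _ = ‖a ∘L p‖ ^ 2 + 2 * ζ := by ring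


noncomputable def mclm {m k : Type*} [Fintype m] [Fintype k] [DecidableEq k] (A : Matrix m k ℝ) :
    EuclideanSpace ℝ k →L[ℝ] EuclideanSpace ℝ m :=
  LinearMap.toContinuousLinearMap (Matrix.toEuclideanLin A)

lemma mclm_mul {m k l : Type*} [Fintype m] [Fintype k] [Fintype l] [DecidableEq k] [DecidableEq l]
    (A : Matrix m k ℝ) (B : Matrix k l ℝ) :
    mclm (A * B) = mclm A ∘L mclm B := by
  ext x
  simp [mclm, Matrix.toEuclideanLin_apply, Matrix.mulVec_mulVec]

lemma mclm_adjoint {m k : Type*} [Fintype m] [Fintype k] [DecidableEq k] [DecidableEq m]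
    (A : Matrix m k ℝ) :
    ContinuousLinearMap.adjoint (mclm A) = mclm Aᵀ := by
  have h1 : Aᴴ = Aᵀ := by ext i j; simp [Matrix.conjTranspose_apply]
  rw [mclm, mclm, ← LinearMap.adjoint_toContinuousLinearMap,
    ← Matrix.toEuclideanLin_conjTranspose_eq_adjoint, h1]

lemma mclm_one {m : Type*} [Fintype m] [DecidableEq m] :
    mclm (1 : Matrix m m ℝ) = 1 := by
  ext x
  simp [mclm, Matrix.toEuclideanLin_apply, Matrix.one_mulVec]

lemma mclm_sub {m k : Type*} [Fintype m] [Fintype k] [DecidableEq k] (A B : Matrix m k ℝ) :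
    mclm (A - B) = mclm A - mclm B := by
  simp [mclm, map_sub]

lemma specNorm_eq_mclm {m k : Type*} [Fintype m] [Fintype k] [DecidableEq k]
    (A : Matrix m k ℝ) : specNorm A = ‖mclm A‖ := rfl

end Stmt7Aux

open Stmt7Aux ContinuousLinearMap

/-- For basis matrices `P, P̂` with `ζ* = ‖(I − P̂P̂ᵀ)P‖₂`:
`κ_s(P̂)² ≤ κ_s(P)² + 2ζ*`. -/
theorem stmt7 {n r : ℕ} (s : ℕ) (P Phat : Matrix (Fin n) (Fin r) ℝ)
    (hP : Pᵀ * P = 1) (hPhat : Phatᵀ * Phat = 1)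
    (ζs : ℝ) (hζ : ζs = specNorm ((1 - Phat * Phatᵀ) * P)) :
    kappa s Phat ^ 2 ≤ kappa s P ^ 2 + 2 * ζs := by
  classical
  set p := mclm P with hpdef
  set q := mclm Phat with hqdef
  have hp : adjoint p ∘L p = 1 := by
    rw [hpdef, mclm_adjoint, ← mclm_mul, hP, mclm_one]
  have hq : adjoint q ∘L q = 1 := by
    rw [hqdef, mclm_adjoint, ← mclm_mul, hPhat, mclm_one]
  have hz : ζs = ‖(1 - q ∘L adjoint q) ∘L p‖ := by
    rw [hζ, specNorm_eq_mclm, mclm_mul, mclm_sub, mclm_one, mclm_mul, hqdef, mclm_adjoint]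
  have key : ∀ T : {T : Finset (Fin n) // T.card ≤ s},
      specNorm (Phat.submatrix (fun i : {i // i ∈ T.1} => i.1) id) ^ 2
        ≤ specNorm (P.submatrix (fun i : {i // i ∈ T.1} => i.1) id) ^ 2 + 2 * ζs := by
    intro T
    set S : Matrix {i // i ∈ T.1} (Fin n) ℝ :=
      (1 : Matrix (Fin n) (Fin n) ℝ).submatrix (fun i => i.1) id with hS
    have hsub : ∀ (M : Matrix (Fin n) (Fin r) ℝ),
        M.submatrix (fun i : {i // i ∈ T.1} => i.1) id = S * M := by
      intro M; ext i j
      simp [hS, Matrix.mul_apply, Matrix.one_apply, ite_mul]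
    have hSS : S * Sᵀ = 1 := by
      ext i j
      rw [Matrix.mul_apply]
      simp only [hS, Matrix.transpose_apply, Matrix.submatrix_apply, id, Matrix.one_apply,
        ite_mul, one_mul, zero_mul, Finset.sum_ite_eq, Finset.mem_univ, if_true]
      rcases eq_or_ne i j with rfl | h
      · simp
      · rw [if_neg h, if_neg (fun e => h (Subtype.ext e.symm))]
    have ha : mclm S ∘L adjoint (mclm S) = 1 := by
      rw [mclm_adjoint, ← mclm_mul, hSS, mclm_one]
    rw [hsub P, hsub Phat, specNorm_eq_mclm, specNorm_eq_mclm, mclm_mul, mclm_mul, hz,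
      ← hpdef, ← hqdef]
    exact main p q (mclm S) hp hq ha
  have hne : Nonempty {T : Finset (Fin n) // T.card ≤ s} := ⟨⟨∅, by simp⟩⟩
  set g : {T : Finset (Fin n) // T.card ≤ s} → ℝ := fun T =>
    specNorm (Phat.submatrix (fun i : {i // i ∈ T.1} => i.1) id) with hgdef
  set f : {T : Finset (Fin n) // T.card ≤ s} → ℝ := fun T =>
    specNorm (P.submatrix (fun i : {i // i ∈ T.1} => i.1) id) with hfdef
  obtain ⟨T₀, hT₀⟩ := exists_eq_ciSup_of_finite (f := g)
  have h1 : kappa s Phat = g T₀ := hT₀.symm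
  have h2 : f T₀ ≤ kappa s P := le_ciSup (Set.Finite.bddAbove (Set.finite_range f)) T₀
  have h3 : (0:ℝ) ≤ f T₀ := norm_nonneg _
  have h4 := key T₀
  have h5 : f T₀ ^ 2 ≤ kappa s P ^ 2 := pow_le_pow_left₀ h3 h2 2
  rw [h1]
  calc g T₀ ^ 2 ≤ f T₀ ^ 2 + 2 * ζs := h4
  _ ≤ kappa s P ^ 2 + 2 * ζs := by linarith
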